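/- arXiv:1511.05398 — 3 statements merged into one kernel-verified Lean document; each statement's English description precedes it below -/
import Mathlib

section
/- For every finite connected simple graph G, every positive integer q, and every integer k ≥ max{χ(G), ⌈χ(G)/2⌉ + q}, there exists a proper k-coloring c of G such that the q-subgraph G_{c,q} is connected (as a spanning subgraph of G). -/
/-- A proper `k`-coloring of `G`: colors are taken in `{1, …, k}` and adjacent
vertices receive different colors. -/
def IsProperColoring {V : Type*} (G : SimpleGraph V) (k : ℕ) (c : V → ℕ) : Prop :=
  (∀ v : V, 1 ≤ c v ∧ c v ≤ k) ∧ ∀ ⦃u v : V⦄, G.Adj u v → c u ≠ c v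

/-- The chromatic number of `G`: the least `k` such that `G` has a proper
`k`-coloring. -/
noncomputable def chromNum {V : Type*} (G : SimpleGraph V) : ℕ :=
  sInf {k : ℕ | ∃ c : V → ℕ, IsProperColoring G k c}

/-- A `q`-backbone `k`-coloring of `(G, H)`: a proper `k`-coloring of `G` such
that the colors of the endpoints of every edge of `H` differ by at least `q`. -/
def IsBackboneColoring {V : Type*} (G H : SimpleGraph V) (q k : ℕ) (c : V → ℕ) : Prop :=
  IsProperColoring G k c ∧ ∀ ⦃u v : V⦄, H.Adj u v → (q : ℤ) ≤ |(c u : ℤ) - (c v : ℤ)|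

/-- The `q`-backbone chromatic number `BBC_q(G, H)`: the least `k` for which a
`q`-backbone `k`-coloring of `(G, H)` exists. -/
noncomputable def BBC {V : Type*} (G H : SimpleGraph V) (q : ℕ) : ℕ :=
  sInf {k : ℕ | ∃ c : V → ℕ, IsBackboneColoring G H q k c}

/-- The `q`-subgraph `G_{c,q}` of a coloring `c`: the spanning subgraph of `G`
whose edges are those edges of `G` whose endpoint colors differ by at least `q`. -/
def qSubgraph {V : Type*} (G : SimpleGraph V) (q : ℕ) (c : V → ℕ) : SimpleGraph V where
  Adj u v := G.Adj u v ∧ (q : ℤ) ≤ |(c u : ℤ) - (c v : ℤ)|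
  symm := by
    constructor
    intro u v h
    exact ⟨h.1.symm, by rw [abs_sub_comm]; exact h.2⟩
  loopless := by
    constructor
    intro v h
    exact (G.ne_of_adj h.1) rfl

namespace Stmt1Aux

variable {V : Type*}

def LoP (t x : ℕ) : Prop := 1 ≤ x ∧ x ≤ t
def HiP (s k x : ℕ) : Prop := k + 1 ≤ x + s ∧ x ≤ k
def PSp (G : SimpleGraph V) (t s k : ℕ) (c : V → ℕ) : Prop :=
  (∀ v, LoP t (c v) ∨ HiP s k (c v)) ∧ ∀ ⦃u v⦄, G.Adj u v → c u ≠ c v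

def kgraph (G : SimpleGraph V) (c : V → ℕ) (a z : ℕ) : SimpleGraph V where
  Adj u v := G.Adj u v ∧ (c u = a ∨ c u = z) ∧ (c v = a ∨ c v = z)
  symm := ⟨fun u v ⟨h1, h2, h3⟩ => ⟨h1.symm, h3, h2⟩⟩
  loopless := ⟨fun v h => (G.ne_of_adj h.1) rfl⟩

lemma walk_cross {H : SimpleGraph V} {A : Set V} :
    ∀ {x y : V}, H.Walk x y → x ∈ A → y ∉ A →
      ∃ u v, u ∈ A ∧ v ∉ A ∧ H.Adj u v := by
  intro x y p
  induction p with
  | nil => intro hx hy; exact absurd hx hy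
  | @cons u v w h p ih =>
    intro hu hw
    by_cases hv : v ∈ A
    · exact ih hv hw
    · exact ⟨u, v, hu, hv, h⟩

lemma reach_mono {H H' : SimpleGraph V} (h : ∀ u v, H.Adj u v → H'.Adj u v) :
    ∀ {x y : V}, H.Walk x y → H'.Reachable x y := by
  intro x y p
  induction p with
  | nil => exact SimpleGraph.Reachable.refl _
  | @cons u v w ha _ ih => exact ((h u v ha).reachable).trans ih

lemma walk_transfer {H H' : SimpleGraph V} {r : V}
    (hr : ∀ u v, H.Reachable r u → H.Reachable r v → H.Adj u v → H'.Adj u v) :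
    ∀ {x y : V}, H.Walk x y → H.Reachable r x → H'.Reachable r x → H'.Reachable r y := by
  intro x y p
  induction p with
  | nil => intro _ h'; exact h'
  | @cons u v w h p ih =>
    intro hu hu'
    have hv : H.Reachable r v := hu.trans h.reachable
    have hv' : H'.Reachable r v := hu'.trans ((hr u v hu hv h).reachable)
    exact ih hv hv'

lemma kgraph_color {G : SimpleGraph V} {c : V → ℕ} {a z : ℕ} :
    ∀ {x y : V}, (kgraph G c a z).Walk x y → (c x = a ∨ c x = z) → (c y = a ∨ c y = z) := by
  intro x y p
  induction p with
  | nil => exact fun h => h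
  | @cons u v w h _ ih => exact fun _ => ih h.2.2

lemma okZ_of_le {q a b : ℕ} (h : a + q ≤ b) : (q:ℤ) ≤ |(b:ℤ) - (a:ℤ)| := by
  have h1 : (q:ℤ) ≤ (b:ℤ) - (a:ℤ) := by omega
  exact le_trans h1 (le_abs_self _)

lemma okZ_of_le' {q a b : ℕ} (h : a + q ≤ b) : (q:ℤ) ≤ |(a:ℤ) - (b:ℤ)| := by
  rw [abs_sub_comm]; exact okZ_of_le h

lemma not_okZ {q a b : ℕ} (h : ¬ (q:ℤ) ≤ |(a:ℤ) - (b:ℤ)|) : a < b + q ∧ b < a + q := by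
  have h2 := abs_lt.mp (lt_of_not_ge h)
  omega

/-- Core swap-win lemma: if the Kempe chain of `w` (colors `c w`, `z`) avoids the
root component, swapping it produces a strictly larger root component,
contradicting maximality. -/
lemma swap_win [Fintype V] (G : SimpleGraph V) (q t s k : ℕ) (r : V) (c : V → ℕ)
    (hPS : PSp G t s k c)
    (hmax : ∀ c', PSp G t s k c' →
      Set.ncard {v | (qSubgraph G q c').Reachable r v} ≤
        Set.ncard {v | (qSubgraph G q c).Reachable r v})
    (w x : V) (hw : ¬ (qSubgraph G q c).Reachable r w)
    (hx : (qSubgraph G q c).Reachable r x)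
    (hadj : G.Adj x w) (z : ℕ) (hzS : LoP t z ∨ HiP s k z) (hzne : z ≠ c w)
    (hok : (q:ℤ) ≤ |(z:ℤ) - (c x : ℤ)|)
    (hKC : ∀ y, (kgraph G c (c w) z).Reachable w y → ¬ (qSubgraph G q c).Reachable r y) :
    False := by
  classical
  set a := c w with ha
  set K : Set V := {v | (kgraph G c a z).Reachable w v} with hK
  -- colors on K
  have hKcol : ∀ v ∈ K, c v = a ∨ c v = z := by
    intro v hv
    obtain ⟨p⟩ := hv
    exact kgraph_color p (Or.inl rfl)
  -- swapped coloring
  set c' : V → ℕ := fun v => if v ∈ K then (if c v = a then z else a) else c v with hc'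
  have hc'val : ∀ v, c' v = if v ∈ K then (if c v = a then z else a) else c v := fun v => rfl
  have hc'out : ∀ v, v ∉ K → c' v = c v := by
    intro v hv; rw [hc'val, if_neg hv]
  have hc'in : ∀ v ∈ K, (c v = a ∧ c' v = z) ∨ (c v = z ∧ c' v = a) := by
    intro v hv
    rcases hKcol v hv with h | h
    · left; exact ⟨h, by rw [hc'val, if_pos hv, if_pos h]⟩
    · right
      refine ⟨h, ?_⟩
      rw [hc'val, if_pos hv]
      have : c v ≠ a := by rw [h]; exact hzne
      rw [if_neg this]
  -- c' is a proper PS coloring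
  have hc'PS : PSp G t s k c' := by
    constructor
    · intro v
      by_cases hv : v ∈ K
      · rcases hc'in v hv with ⟨_, h2⟩ | ⟨_, h2⟩
        · rw [h2]; exact hzS
        · rw [h2, ha]; exact hPS.1 w
      · rw [hc'out v hv]; exact hPS.1 v
    · intro u v huv
      have hne := hPS.2 huv
      by_cases hu : u ∈ K <;> by_cases hv : v ∈ K
      · rcases hc'in u hu with ⟨h1, h2⟩ | ⟨h1, h2⟩ <;>
          rcases hc'in v hv with ⟨h3, h4⟩ | ⟨h3, h4⟩ <;>
          rw [h2, h4] <;> first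
            | (exact absurd (h1.trans h3.symm) hne)
            | (exact hzne)
            | (exact fun hh => hzne hh.symm)
      · -- u in K, v not in K : c v ∉ {a, z}
        have hcv : ¬ (c v = a ∨ c v = z) := by
          intro hcv
          apply hv
          have hwu : (kgraph G c a z).Reachable w u := hu
          exact hwu.trans (SimpleGraph.Adj.reachable ⟨huv, hKcol u hu, hcv⟩)
        rw [hc'out v hv]
        rcases hc'in u hu with ⟨_, h2⟩ | ⟨_, h2⟩ <;> rw [h2] <;> intro hh <;>
          exact hcv (by rw [hh]; simp)
      · have hcu : ¬ (c u = a ∨ c u = z) := by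
          intro hcu
          apply hu
          have hwv : (kgraph G c a z).Reachable w v := hv
          exact hwv.trans (SimpleGraph.Adj.reachable ⟨huv.symm, hKcol v hv, hcu⟩)
        rw [hc'out u hu]
        rcases hc'in v hv with ⟨_, h4⟩ | ⟨_, h4⟩ <;> rw [h4] <;> intro hh <;>
          exact hcu (by rw [← hh]; simp)
      · rw [hc'out u hu, hc'out v hv]; exact hne
  -- members of the old component are not in K
  have hCnotK : ∀ v, (qSubgraph G q c).Reachable r v → v ∉ K := by
    intro v hv hvK
    exact hKC v hvK hv
  -- old component is contained in the new one
  have htrans : ∀ v, (qSubgraph G q c).Reachable r v → (qSubgraph G q c').Reachable r v := by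
    intro v hv
    obtain ⟨p⟩ := hv.symm
    have hr : ∀ u u', (qSubgraph G q c).Reachable r u → (qSubgraph G q c).Reachable r u' →
        (qSubgraph G q c).Adj u u' → (qSubgraph G q c').Adj u u' := by
      intro u u' hu hu' huu
      have h1 : c' u = c u := hc'out u (hCnotK u hu)
      have h2 : c' u' = c u' := hc'out u' (hCnotK u' hu')
      exact ⟨huu.1, by rw [h1, h2]; exact huu.2⟩
    exact walk_transfer hr p.reverse (SimpleGraph.Reachable.refl r)
      (SimpleGraph.Reachable.refl r)
  -- w is in the new component
  have hwK : w ∈ K := SimpleGraph.Reachable.refl w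
  have hc'w : c' w = z := by
    rcases hc'in w hwK with ⟨_, h2⟩ | ⟨h1, _⟩
    · exact h2
    · exact absurd h1.symm hzne
  have hc'x : c' x = c x := hc'out x (hCnotK x hx)
  have hwnew : (qSubgraph G q c').Reachable r w := by
    have hadj' : (qSubgraph G q c').Adj x w := by
      refine ⟨hadj, ?_⟩
      rw [hc'x, hc'w, abs_sub_comm]
      exact hok
    exact (htrans x hx).trans hadj'.reachable
  -- cardinality contradiction
  have hsub : insert w {v | (qSubgraph G q c).Reachable r v} ⊆
      {v | (qSubgraph G q c').Reachable r v} := by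
    intro v hv
    rcases Set.mem_insert_iff.mp hv with h | h
    · rw [h]; exact hwnew
    · exact htrans v h
  have hfin : ({v | (qSubgraph G q c).Reachable r v} : Set V).Finite := Set.toFinite _
  have hcard1 : (insert w {v | (qSubgraph G q c).Reachable r v}).ncard =
      {v | (qSubgraph G q c).Reachable r v}.ncard + 1 :=
    Set.ncard_insert_of_notMem hw hfin
  have hcard2 := Set.ncard_le_ncard hsub (Set.toFinite _)
  have := hmax c' hc'PS
  omega

/-- Protected move: if `|z - c w| ≥ q` then the Kempe chain cannot enter the
root component, so `swap_win` applies. -/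
lemma move_prot [Fintype V] (G : SimpleGraph V) (q t s k : ℕ) (r : V) (c : V → ℕ)
    (hPS : PSp G t s k c)
    (hmax : ∀ c', PSp G t s k c' →
      Set.ncard {v | (qSubgraph G q c').Reachable r v} ≤
        Set.ncard {v | (qSubgraph G q c).Reachable r v})
    (w x : V) (hw : ¬ (qSubgraph G q c).Reachable r w)
    (hx : (qSubgraph G q c).Reachable r x)
    (hadj : G.Adj x w) (z : ℕ) (hzS : LoP t z ∨ HiP s k z) (hzne : z ≠ c w)
    (hprot : (q:ℤ) ≤ |(z:ℤ) - (c w : ℤ)|)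
    (hok : (q:ℤ) ≤ |(z:ℤ) - (c x : ℤ)|) : False := by
  refine swap_win G q t s k r c hPS hmax w x hw hx hadj z hzS hzne hok ?_
  intro y hy hyC
  -- every kgraph edge is a qSubgraph edge
  have hmono : ∀ u v, (kgraph G c (c w) z).Adj u v → (qSubgraph G q c).Adj u v := by
    intro u v h
    refine ⟨h.1, ?_⟩
    have hne := hPS.2 h.1
    rcases h.2.1 with h1 | h1 <;> rcases h.2.2 with h2 | h2
    · exact absurd (h1.trans h2.symm) hne
    · rw [h1, h2, abs_sub_comm]; exact hprot
    · rw [h1, h2]; exact hprot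
    · exact absurd (h1.trans h2.symm) hne
  obtain ⟨p⟩ := hy
  have : (qSubgraph G q c).Reachable w y := reach_mono hmono p
  exact hw (hyC.trans this.symm)

/-- Same-side move: if `z` has the same side (low/high) as `c w`, then either the
chain avoids the component (win by `swap_win`), or the chain entry produces a
boundary pair of that side, to which a protected hub move applies. -/
lemma move_side [Fintype V] (G : SimpleGraph V) (q t s k : ℕ)
    (hq : 1 ≤ q) (hst : s ≤ t) (ht1 : 1 ≤ t) (hs1 : 1 ≤ s) (htqk : t + q ≤ k)
    (r : V) (c : V → ℕ)
    (hPS : PSp G t s k c)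
    (hmax : ∀ c', PSp G t s k c' →
      Set.ncard {v | (qSubgraph G q c').Reachable r v} ≤
        Set.ncard {v | (qSubgraph G q c).Reachable r v})
    (w x : V) (hw : ¬ (qSubgraph G q c).Reachable r w)
    (hx : (qSubgraph G q c).Reachable r x)
    (hadj : G.Adj x w) (z : ℕ) (hzne : z ≠ c w)
    (hside : (LoP t z ∧ LoP t (c w)) ∨ (HiP s k z ∧ HiP s k (c w)))
    (hok : (q:ℤ) ≤ |(z:ℤ) - (c x : ℤ)|) : False := by
  classical
  by_cases hKC : ∀ y, (kgraph G c (c w) z).Reachable w y → ¬ (qSubgraph G q c).Reachable r y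
  · have hzS : LoP t z ∨ HiP s k z := by
      rcases hside with ⟨h, _⟩ | ⟨h, _⟩
      · exact Or.inl h
      · exact Or.inr h
    exact swap_win G q t s k r c hPS hmax w x hw hx hadj z hzS hzne hok hKC
  · push_neg at hKC
    obtain ⟨y, hy, hyC⟩ := hKC
    obtain ⟨p⟩ := hy
    -- walk from w (outside component) to y (inside): crossing edge
    obtain ⟨p', w0, hp'A, hw0A, hkadj⟩ :=
      walk_cross (A := {v | ¬ (qSubgraph G q c).Reachable r v}) p hw (by simpa using hyC)
    have hw0C : (qSubgraph G q c).Reachable r w0 := by simpa using hw0A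
    have hp'C : ¬ (qSubgraph G q c).Reachable r p' := hp'A
    have hadj' : G.Adj w0 p' := hkadj.1.symm
    have hcp' : c p' = c w ∨ c p' = z := hkadj.2.1
    have hcw0 : c w0 = c w ∨ c w0 = z := hkadj.2.2
    rcases hside with ⟨hzLo, hwLo⟩ | ⟨hzHi, hwHi⟩
    · -- both low: move p' to k (top high)
      have hp'Lo : LoP t (c p') := by rcases hcp' with h | h <;> rw [h] <;> assumption
      have hw0Lo : LoP t (c w0) := by rcases hcw0 with h | h <;> rw [h] <;> assumption
      refine move_prot G q t s k r c hPS hmax p' w0 hp'C hw0C hadj' k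
        (Or.inr ⟨by omega, le_refl k⟩) ?_ ?_ ?_
      · have := hp'Lo.2; omega
      · exact okZ_of_le (by have := hp'Lo.2; omega)
      · exact okZ_of_le (by have := hw0Lo.2; omega)
    · -- both high: move p' to 1 (bottom low)
      have hp'Hi : HiP s k (c p') := by rcases hcp' with h | h <;> rw [h] <;> assumption
      have hw0Hi : HiP s k (c w0) := by rcases hcw0 with h | h <;> rw [h] <;> assumption
      refine move_prot G q t s k r c hPS hmax p' w0 hp'C hw0C hadj' 1
        (Or.inl ⟨le_refl 1, ht1⟩) ?_ ?_ ?_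
      · have := hp'Hi.1; omega
      · exact okZ_of_le' (by have := hp'Hi.1; omega)
      · exact okZ_of_le' (by have := hw0Hi.1; omega)

end Stmt1Aux


open Stmt1Aux

/-- If `G` is connected and `k ≥ max {χ(G), ⌈χ(G)/2⌉ + q}`, then `G` has a
proper `k`-coloring `c` whose `q`-subgraph `G_{c,q}` is connected. -/
theorem stmt_1 {V : Type*} [Fintype V] (G : SimpleGraph V) (hG : G.Connected)
    (q : ℕ) (hq : 1 ≤ q) (k : ℕ)
    (hk : max (chromNum G) ((chromNum G + 1) / 2 + q) ≤ k) :
    ∃ c : V → ℕ, IsProperColoring G k c ∧ (qSubgraph G q c).Connected := by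
  classical
  obtain ⟨r⟩ := hG.nonempty
  -- an optimal proper coloring
  have hsetne : {m : ℕ | ∃ c : V → ℕ, IsProperColoring G m c}.Nonempty := by
    refine ⟨Fintype.card V, fun v => ((Fintype.equivFin V) v).val + 1, fun v => ?_, ?_⟩
    · dsimp only
      exact ⟨by omega, by have := ((Fintype.equivFin V) v).isLt; omega⟩
    · intro u v huv hcc
      dsimp only at hcc
      have hne2 : u ≠ v := huv.ne
      have : (Fintype.equivFin V) u = (Fintype.equivFin V) v := by
        apply Fin.ext; omega
      exact hne2 ((Fintype.equivFin V).injective this)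
  obtain ⟨φ, hφ⟩ : ∃ c : V → ℕ, IsProperColoring G (chromNum G) c := Nat.sInf_mem hsetne
  set χ := chromNum G with hχdef
  set t := (χ + 1) / 2 with htdef
  set s := χ / 2 with hsdef
  have hχ1 : 1 ≤ χ := by have := hφ.1 r; omega
  have hts : t + s = χ := by omega
  have hst : s ≤ t := by omega
  have ht1 : 1 ≤ t := by omega
  have hkχ : χ ≤ k := le_trans (le_max_left _ _) hk
  have htqk : t + q ≤ k := le_trans (le_max_right _ _) hk
  -- base PS coloring
  have hPS0 : ∃ c : V → ℕ, PSp G t s k c := by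
    refine ⟨fun v => if φ v ≤ t then φ v else k + φ v - χ, ?_, ?_⟩
    · intro v
      have hb := hφ.1 v
      dsimp only
      by_cases hle : φ v ≤ t
      · left; rw [if_pos hle]; exact ⟨hb.1, hle⟩
      · right; rw [if_neg hle]; constructor <;> omega
    · intro u v huv
      have hb1 := hφ.1 u
      have hb2 := hφ.1 v
      have hne2 := hφ.2 huv
      dsimp only
      split_ifs <;> omega
  obtain ⟨c₀, hc₀⟩ := hPS0
  -- maximize component of r
  set SN : Set ℕ :=
    {n | ∃ c : V → ℕ, PSp G t s k c ∧
      Set.ncard {v | (qSubgraph G q c).Reachable r v} = n} with hSN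
  have hSNne : SN.Nonempty := ⟨_, c₀, hc₀, rfl⟩
  have hSNbdd : BddAbove SN := by
    refine ⟨Fintype.card V, ?_⟩
    rintro n ⟨c, _, rfl⟩
    calc Set.ncard {v | (qSubgraph G q c).Reachable r v}
        ≤ Set.ncard (Set.univ : Set V) := Set.ncard_le_ncard (Set.subset_univ _) (Set.toFinite _)
      _ = Fintype.card V := by rw [Set.ncard_univ, Nat.card_eq_fintype_card]
  obtain ⟨c, hcPS, hceq⟩ := Nat.sSup_mem hSNne hSNbdd
  have hmax : ∀ c', PSp G t s k c' →
      Set.ncard {v | (qSubgraph G q c').Reachable r v} ≤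
        Set.ncard {v | (qSubgraph G q c).Reachable r v} := by
    intro c' h
    rw [hceq]
    exact le_csSup hSNbdd ⟨c', h, rfl⟩
  -- every vertex is reachable from r in the q-subgraph
  have hall : ∀ v, (qSubgraph G q c).Reachable r v := by
    by_contra hcon
    push_neg at hcon
    obtain ⟨v₀, hv₀⟩ := hcon
    obtain ⟨p⟩ := hG.preconnected r v₀
    obtain ⟨x, w, hxC, hwC, hadj⟩ :=
      walk_cross (A := {v | (qSubgraph G q c).Reachable r v}) p
        (SimpleGraph.Reachable.refl r) hv₀
    have hxC : (qSubgraph G q c).Reachable r x := hxC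
    have hwC : ¬ (qSubgraph G q c).Reachable r w := hwC
    have hχ2 : 2 ≤ χ := by
      have h1 := hφ.1 x; have h2 := hφ.1 w; have h3 := hφ.2 hadj; omega
    have hs1 : 1 ≤ s := by omega
    have hnot : ¬ ((q:ℤ) ≤ |(c x : ℤ) - (c w : ℤ)|) := by
      intro hcc
      exact hwC (hxC.trans (SimpleGraph.Adj.reachable ⟨hadj, hcc⟩))
    have hnotn := not_okZ hnot
    rcases hcPS.1 w with hwLo | hwHi <;> rcases hcPS.1 x with hxLo | hxHi
    · -- both low : protected move w → k
      refine move_prot G q t s k r c hcPS hmax w x hwC hxC hadj k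
        (Or.inr ⟨by omega, le_refl k⟩) (by have := hwLo.2; omega) ?_ ?_
      · exact okZ_of_le (by have := hwLo.2; omega)
      · exact okZ_of_le (by have := hxLo.2; omega)
    · -- w low, x high : same-side move w → 1
      have hw1 : c w ≠ 1 := by
        intro h1
        apply hnot
        rw [h1]
        exact okZ_of_le (by have := hxHi.1; omega)
      refine move_side G q t s k hq hst ht1 hs1 htqk r c hcPS hmax w x hwC hxC hadj 1
        (fun h => hw1 h.symm) (Or.inl ⟨⟨le_refl 1, ht1⟩, hwLo⟩) ?_
      · exact okZ_of_le' (by have := hxHi.1; omega)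
    · -- w high, x low : same-side move w → k
      have hwk : c w ≠ k := by
        intro h1
        apply hnot
        rw [h1]
        exact okZ_of_le' (by have := hxLo.2; omega)
      refine move_side G q t s k hq hst ht1 hs1 htqk r c hcPS hmax w x hwC hxC hadj k
        (fun h => hwk h.symm) (Or.inr ⟨⟨by omega, le_refl k⟩, hwHi⟩) ?_
      · exact okZ_of_le (by have := hxLo.2; omega)
    · -- both high : protected move w → 1
      refine move_prot G q t s k r c hcPS hmax w x hwC hxC hadj 1
        (Or.inl ⟨le_refl 1, ht1⟩) ?_ ?_ ?_
      · have := hwHi.1; omega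
      · exact okZ_of_le' (by have := hwHi.1; omega)
      · exact okZ_of_le' (by have := hxHi.1; omega)
  -- conclude
  refine ⟨c, ⟨?_, hcPS.2⟩, ?_⟩
  · intro v
    rcases hcPS.1 v with h | h
    · exact ⟨h.1, by have := h.2; omega⟩
    · exact ⟨by have := h.1; omega, h.2⟩
  · haveI : Nonempty V := ⟨r⟩
    exact ⟨fun u v => (hall u).symm.trans (hall v)⟩
end

section
/- Let G be a finite simple graph, let q be a positive integer, let H be a spanning subgraph of G with minimum degree δ(H) ≥ 1, and let c be a q-backbone k-coloring of (G,H) with k < 2q. Then no vertex u of G satisfies k − q < c(u) ≤ q; that is, none of the 2q − k colors in {k − q + 1, …, q} is used by c. Consequently k − (2q − k) ≥ χ(G). -/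
/-- If `H` is a spanning subgraph of `G` with minimum degree at least one and `c`
is a `q`-backbone `k`-coloring of `(G,H)` with `k < 2q`, then no vertex receives
a color in `{k-q+1, …, q}`; consequently `k - (2q - k) ≥ χ(G)`. -/
theorem stmt_3 {V : Type*} [Fintype V] (G H : SimpleGraph V)
    (hHG : H ≤ G) (hdeg : ∀ v : V, ∃ w : V, H.Adj v w) (q : ℕ) (hq : 1 ≤ q)
    (k : ℕ) (hk : k < 2 * q) (c : V → ℕ) (hc : IsBackboneColoring G H q k c) :
    (∀ u : V, ¬ (k - q < c u ∧ c u ≤ q)) ∧ chromNum G ≤ k - (2 * q - k) := by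
  obtain ⟨⟨hbd, hadj⟩, hback⟩ := hc
  have part1 : ∀ u : V, ¬ (k - q < c u ∧ c u ≤ q) := by
    rintro u ⟨h1, h2⟩
    obtain ⟨w, hw⟩ := hdeg u
    have hb := hback hw
    have h3 := hbd u; have h4 := hbd w
    rcases le_abs.mp hb with h | h <;> omega
  refine ⟨part1, ?_⟩
  apply Nat.sInf_le
  refine ⟨fun v => if c v ≤ k - q then c v else c v - (2*q - k), ?_, ?_⟩
  · intro v
    have h3 := hbd v; have hp := part1 v
    by_cases hv : c v ≤ k - q <;> simp only [hv, if_true, if_false] <;> omega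
  · intro u v huv
    have h3 := hbd u; have h4 := hbd v
    have hp := part1 u; have hq' := part1 v
    have hne := hadj huv
    simp only []
    by_cases h5 : c u ≤ k - q <;> by_cases h6 : c v ≤ k - q <;>
      simp only [h5, h6, if_true, if_false] <;> omega
end

section
/- For every finite connected bipartite simple graph G with at least one edge and every positive integer q, there exists a spanning tree T of G with BBC_q(G,T) = q + 1, and every spanning tree T' of G satisfies BBC_q(G,T') ≥ q + 1; i.e., the minimum of BBC_q(G,T) over all spanning trees T of G equals q + 1. -/
/-- `G` is bipartite: its vertices can be split in two parts such that every
edge joins the two parts. -/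
def IsBipartite {V : Type*} (G : SimpleGraph V) : Prop :=
  ∃ f : V → Bool, ∀ ⦃u v : V⦄, G.Adj u v → f u ≠ f v


section
open SimpleGraph

/-- Deleting an edge whose endpoints remain reachable preserves reachability. -/
lemma reach_aux {V : Type*} {H : SimpleGraph V} {a b : V}
    (hr : (H \ fromEdgeSet {s(a, b)}).Reachable a b) :
    ∀ {u v : V}, H.Reachable u v → (H \ fromEdgeSet {s(a, b)}).Reachable u v := by
  intro u v huv
  obtain ⟨p⟩ := huv
  induction p with
  | nil => exact Reachable.refl _
  | cons h p ih =>
    rename_i x y z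
    refine Reachable.trans ?_ ih
    by_cases he : s(x, y) = s(a, b)
    · rw [Sym2.eq_iff] at he
      rcases he with ⟨rfl, rfl⟩ | ⟨rfl, rfl⟩
      · exact hr
      · exact hr.symm
    · exact Adj.reachable (by
        rw [sdiff_adj]
        refine ⟨h, ?_⟩
        rw [fromEdgeSet_adj]
        rintro ⟨hmem, -⟩
        exact he (Set.mem_singleton_iff.mp hmem))

/-- Existence of a spanning tree for a finite connected graph. -/
lemma exists_spanning_tree {V : Type*} [Finite V] (G : SimpleGraph V) (hG : G.Connected) :
    ∃ T : SimpleGraph V, T ≤ G ∧ T.IsTree := by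
  classical
  have : ∃ m ∈ {H : SimpleGraph V | H ≤ G ∧ H.Connected},
      ∀ x ∈ {H : SimpleGraph V | H ≤ G ∧ H.Connected}, ¬ x < m :=
    (Finite.to_wellFoundedLT (α := SimpleGraph V)).wf.has_min _ ⟨G, le_refl _, hG⟩
  obtain ⟨T, ⟨hTG, hTc⟩, hmin⟩ := this
  refine ⟨T, hTG, hTc, ?_⟩
  intro v c hc
  -- c is a cycle; it must have a first edge
  cases c with
  | nil => exact hc.ne_nil rfl
  | cons h p =>
    rename_i x
    have hmem : s(v, x) ∈ (Walk.cons h p).edges := by simp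
    have hreach : (T \ fromEdgeSet {s(v, x)}).Reachable v x :=
      (adj_and_reachable_delete_edges_iff_exists_cycle.mpr ⟨v, Walk.cons h p, hc, hmem⟩).2
    have hpre : (T \ fromEdgeSet {s(v, x)}).Preconnected :=
      fun u w => reach_aux hreach (hTc.preconnected u w)
    have hne : Nonempty V := hTc.nonempty
    have hconn : (T \ fromEdgeSet {s(v, x)}).Connected := ⟨hpre⟩
    have hlt : (T \ fromEdgeSet {s(v, x)}) < T := by
      refine lt_of_le_of_ne sdiff_le ?_
      intro heq
      have h2 : (T \ fromEdgeSet {s(v, x)}).Adj v x := by rw [heq]; exact h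
      rw [sdiff_adj, fromEdgeSet_adj] at h2
      exact h2.2 ⟨rfl, h.ne⟩
    exact hmin _ ⟨le_trans sdiff_le hTG, hconn⟩ hlt

end

/-- Every connected bipartite graph `G` with at least one edge has a spanning
tree `T` with `BBC_q(G,T) = q + 1`, and every spanning tree `T'` of `G`
satisfies `BBC_q(G,T') ≥ q + 1`. -/
theorem stmt_4 {V : Type*} [Fintype V] (G : SimpleGraph V) (hG : G.Connected)
    (hbip : IsBipartite G) (hedge : ∃ u v : V, G.Adj u v) (q : ℕ) (hq : 1 ≤ q) :
    (∃ T : SimpleGraph V, T ≤ G ∧ T.IsTree ∧ BBC G T q = q + 1) ∧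
    (∀ T' : SimpleGraph V, T' ≤ G → T'.IsTree → q + 1 ≤ BBC G T' q) := by
  obtain ⟨f, hf⟩ := hbip
  set c : V → ℕ := fun v => if f v then q + 1 else 1 with hc
  have hbb : ∀ T : SimpleGraph V, T ≤ G → IsBackboneColoring G T q (q + 1) c := by
    intro T hT
    refine ⟨⟨fun v => by simp only [hc]; split <;> omega, ?_⟩, ?_⟩
    · intro u v huv
      have := hf huv
      simp only [hc]
      rcases Bool.eq_false_or_eq_true (f u) with h1 | h1 <;>
        rcases Bool.eq_false_or_eq_true (f v) with h2 | h2 <;>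
        simp_all <;> omega
    · intro u v huv
      have := hf (hT huv)
      simp only [hc]
      rcases Bool.eq_false_or_eq_true (f u) with h1 | h1 <;>
        rcases Bool.eq_false_or_eq_true (f v) with h2 | h2 <;>
        simp_all
  have hupper : ∀ T : SimpleGraph V, T ≤ G → BBC G T q ≤ q + 1 := by
    intro T hT
    exact Nat.sInf_le ⟨c, hbb T hT⟩
  have hlower : ∀ T' : SimpleGraph V, T' ≤ G → T'.IsTree → q + 1 ≤ BBC G T' q := by
    intro T' hT' hTree
    -- T' has an edge
    obtain ⟨u, v, huv⟩ := hedge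
    have hne : u ≠ v := huv.ne
    obtain ⟨p⟩ := hTree.isConnected.preconnected u v
    obtain ⟨a, b, hab⟩ : ∃ a b : V, T'.Adj a b := by
      cases p with
      | nil => exact absurd rfl hne
      | cons h _ => exact ⟨_, _, h⟩
    refine le_csInf ⟨q + 1, c, hbb T' hT'⟩ ?_
    rintro k ⟨c', ⟨hbound, -⟩, hback⟩
    have h1 := hbound a
    have h2 := hbound b
    have h3 := hback hab
    rcases abs_cases ((c' a : ℤ) - (c' b : ℤ)) with ⟨heq, -⟩ | ⟨heq, -⟩ <;> omega
  refine ⟨?_, hlower⟩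
  obtain ⟨T, hTG, hTree⟩ := exists_spanning_tree G hG
  exact ⟨T, hTG, hTree, le_antisymm (hupper T hTG) (hlower T hTG hTree)⟩
end
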